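/- The discrete Sierpinski triangle is aperiodic under translation: there is no pair (a,b) ∈ ℕ×ℕ with (a,b) ≠ (0,0) such that for all (x,y) ∈ ℕ×ℕ, (x,y) ∈ S_△ if and only if (x+a, y+b) ∈ S_△. -/

import Mathlib

/-- The `i`-th stage of the discrete Sierpinski triangle:
`S_0 = {(0,0)}`, `S_{i+1} = S_i ∪ (S_i + 2^i·V)` with `V = {(1,0),(0,1)}`. -/
def sierpStage : ℕ → Set (ℕ × ℕ)
  | 0 => {(0, 0)}
  | i + 1 => sierpStage i ∪
      {p | ∃ m ∈ sierpStage i, ∃ n ∈ ({(1, 0), (0, 1)} : Set (ℕ × ℕ)), p = m + (2 ^ i) • n}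

/-- The discrete Sierpinski triangle `S_△ = ⋃ i, S_i`. -/
def sierpinski : Set (ℕ × ℕ) := ⋃ i, sierpStage i

lemma and_zero_iff (x y : ℕ) :
    x &&& y = 0 ↔ ∀ j, ¬(x.testBit j = true ∧ y.testBit j = true) := by
  constructor
  · intro h j ⟨h1, h2⟩
    have := Nat.testBit_land x y j
    simp [h, h1, h2] at this
  · intro h
    apply Nat.eq_of_testBit_eq
    intro j
    have := h j
    simp only [Nat.testBit_land, Nat.zero_testBit]
    cases hx : x.testBit j <;> cases hy : y.testBit j <;> simp_all

lemma lt_pow_of_testBit_false {x i : ℕ} (hx : x < 2 ^ (i + 1))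
    (ht : x.testBit i = false) : x < 2 ^ i := by
  refine Nat.lt_of_testBit i ht Nat.testBit_two_pow_self ?_
  intro j hj
  rw [Nat.testBit_eq_false_of_lt (lt_of_lt_of_le hx (Nat.pow_le_pow_right (by norm_num) hj)),
    Nat.testBit_two_pow_of_ne (by omega)]

lemma land_add_pow_iff {x y i : ℕ} (hx : x < 2 ^ i) (hy : y < 2 ^ i) :
    (2 ^ i + x) &&& y = 0 ↔ x &&& y = 0 := by
  have hlt : 2 ^ i + x < 2 ^ (i + 1) := by
    have : 2 ^ (i + 1) = 2 ^ i + 2 ^ i := by ring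
    omega
  rw [and_zero_iff, and_zero_iff]
  constructor
  · intro h j ⟨h1, h2⟩
    rcases lt_trichotomy j i with hj | rfl | hj
    · exact h j ⟨by rw [Nat.testBit_two_pow_add_gt hj]; exact h1, h2⟩
    · rw [Nat.testBit_eq_false_of_lt hy] at h2; simp at h2
    · rw [Nat.testBit_eq_false_of_lt (lt_of_lt_of_le hx
        (Nat.pow_le_pow_right (by norm_num) hj.le))] at h1
      simp at h1
  · intro h j ⟨h1, h2⟩
    rcases lt_trichotomy j i with hj | rfl | hj
    · exact h j ⟨by rw [← Nat.testBit_two_pow_add_gt hj x]; exact h1, h2⟩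
    · rw [Nat.testBit_eq_false_of_lt hy] at h2; simp at h2
    · rw [Nat.testBit_eq_false_of_lt (lt_of_lt_of_le hlt
        (Nat.pow_le_pow_right (by norm_num) (by omega)))] at h1
      simp at h1

/-- Numbers with disjoint binary digits below `2^i` sum below `2^i`. -/
lemma add_lt_of_land_zero : ∀ i : ℕ, ∀ x y : ℕ, x &&& y = 0 → x < 2 ^ i → y < 2 ^ i →
    x + y < 2 ^ i := by
  intro i
  induction i with
  | zero => intro x y _ hx hy; simp at hx hy; omega
  | succ i ih =>
    intro x y h hx hy
    have hpow : 2 ^ (i + 1) = 2 ^ i + 2 ^ i := by ring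
    cases hxt : x.testBit i with
    | false =>
      cases hyt : y.testBit i with
      | false =>
        have := ih x y h (lt_pow_of_testBit_false hx hxt) (lt_pow_of_testBit_false hy hyt)
        omega
      | true =>
        have hge : 2 ^ i ≤ y := Nat.ge_two_pow_of_testBit hyt
        have hx' : x < 2 ^ i := lt_pow_of_testBit_false hx hxt
        have hy' : y - 2 ^ i < 2 ^ i := by omega
        have heq : y = 2 ^ i + (y - 2 ^ i) := by omega
        rw [Nat.land_comm] at h
        rw [heq, land_add_pow_iff hy' hx'] at h
        have := ih x (y - 2 ^ i) (by rw [Nat.land_comm]; exact h) hx' hy'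
        omega
    | true =>
      have hge : 2 ^ i ≤ x := Nat.ge_two_pow_of_testBit hxt
      have hyt : y.testBit i = false := by
        by_contra hc
        simp only [Bool.not_eq_false] at hc
        exact (and_zero_iff x y).mp h i ⟨hxt, hc⟩
      have hy' : y < 2 ^ i := lt_pow_of_testBit_false hy hyt
      have hx' : x - 2 ^ i < 2 ^ i := by omega
      have heq : x = 2 ^ i + (x - 2 ^ i) := by omega
      rw [heq, land_add_pow_iff hx' hy'] at h
      have := ih (x - 2 ^ i) y h hx' hy'
      omega

lemma mem_stage_iff : ∀ i x y : ℕ, (x, y) ∈ sierpStage i ↔ x &&& y = 0 ∧ x + y < 2 ^ i := by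
  intro i
  induction i with
  | zero =>
    intro x y
    simp only [sierpStage, Set.mem_singleton_iff, Prod.mk.injEq, pow_zero]
    constructor
    · rintro ⟨rfl, rfl⟩; simp
    · rintro ⟨-, h⟩; omega
  | succ i ih =>
    intro x y
    have hpow : 2 ^ (i + 1) = 2 ^ i + 2 ^ i := by ring
    constructor
    · rintro (h | ⟨m, hm, n, hn, hp⟩)
      · obtain ⟨h1, h2⟩ := (ih x y).mp h
        exact ⟨h1, by omega⟩
      · obtain ⟨h1, h2⟩ := (ih m.1 m.2).mp hm
        rcases hn with rfl | rfl
        · simp only [Prod.ext_iff, Prod.fst_add, Prod.snd_add, Prod.smul_mk, smul_eq_mul,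
            mul_one, mul_zero] at hp
          obtain ⟨hpx, hpy⟩ := hp
          have hx1 : m.1 < 2 ^ i := by omega
          have hy1 : m.2 < 2 ^ i := by omega
          subst hpx; subst hpy
          refine ⟨?_, by omega⟩
          rw [add_zero, add_comm, land_add_pow_iff hx1 hy1]
          exact h1
        · simp only [Prod.ext_iff, Prod.fst_add, Prod.snd_add, Prod.smul_mk, smul_eq_mul,
            mul_one, mul_zero] at hp
          obtain ⟨hpx, hpy⟩ := hp
          have hx1 : m.1 < 2 ^ i := by omega
          have hy1 : m.2 < 2 ^ i := by omega
          subst hpx; subst hpy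
          refine ⟨?_, by omega⟩
          rw [add_zero, Nat.land_comm, add_comm, land_add_pow_iff hy1 hx1, Nat.land_comm]
          exact h1
    · rintro ⟨h1, h2⟩
      by_cases hsm : x + y < 2 ^ i
      · exact Or.inl ((ih x y).mpr ⟨h1, hsm⟩)
      · right
        cases hxt : x.testBit i with
        | true =>
          have hge : 2 ^ i ≤ x := Nat.ge_two_pow_of_testBit hxt
          have hyt : y.testBit i = false := by
            by_contra hc
            simp only [Bool.not_eq_false] at hc
            exact (and_zero_iff x y).mp h1 i ⟨hxt, hc⟩
          have hy' : y < 2 ^ i := lt_pow_of_testBit_false (by omega) hyt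
          have hx' : x - 2 ^ i < 2 ^ i := by omega
          have heq : x = 2 ^ i + (x - 2 ^ i) := by omega
          rw [heq, land_add_pow_iff hx' hy'] at h1
          have hlt : (x - 2 ^ i) + y < 2 ^ i := add_lt_of_land_zero i _ _ h1 hx' hy'
          refine ⟨(x - 2 ^ i, y), (ih _ _).mpr ⟨h1, hlt⟩, (1, 0), by simp, ?_⟩
          simp only [Prod.ext_iff, Prod.fst_add, Prod.snd_add, Prod.smul_mk, smul_eq_mul,
            mul_one, mul_zero]
          omega
        | false =>
          have hx' : x < 2 ^ i := lt_pow_of_testBit_false (by omega) hxt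
          cases hyt : y.testBit i with
          | false =>
            have hy' : y < 2 ^ i := lt_pow_of_testBit_false (by omega) hyt
            exact absurd (add_lt_of_land_zero i x y h1 hx' hy') hsm
          | true =>
            have hge : 2 ^ i ≤ y := Nat.ge_two_pow_of_testBit hyt
            have hy' : y - 2 ^ i < 2 ^ i := by omega
            have heq : y = 2 ^ i + (y - 2 ^ i) := by omega
            rw [Nat.land_comm, heq, land_add_pow_iff hy' hx', Nat.land_comm] at h1
            have hlt : x + (y - 2 ^ i) < 2 ^ i := add_lt_of_land_zero i _ _ h1 hx' hy'
            refine ⟨(x, y - 2 ^ i), (ih _ _).mpr ⟨h1, hlt⟩, (0, 1), by simp, ?_⟩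
            simp only [Prod.ext_iff, Prod.fst_add, Prod.snd_add, Prod.smul_mk, smul_eq_mul,
              mul_one, mul_zero]
            omega

lemma mem_sierpinski_iff (x y : ℕ) : (x, y) ∈ sierpinski ↔ x &&& y = 0 := by
  constructor
  · rintro hm
    obtain ⟨_, ⟨i, rfl⟩, h⟩ := hm
    exact ((mem_stage_iff i x y).mp h).1
  · intro h
    refine Set.mem_iUnion.mpr ⟨x + y, (mem_stage_iff _ x y).mpr ⟨h, Nat.lt_two_pow_self⟩⟩

lemma pow_land_of_lt {x i : ℕ} (hx : x < 2 ^ i) : x &&& 2 ^ i = 0 := by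
  rw [Nat.and_two_pow, Nat.testBit_eq_false_of_lt hx]
  simp

lemma testBit_mul_pred {a K : ℕ} (ha : 1 ≤ a) (haK : a ≤ 2 ^ K) :
    ((2 ^ (K + 1) - 1) * a).testBit K = true := by
  have hP : 0 < 2 ^ K := Nat.pow_pos (n := K) (by norm_num)
  have hpow : 2 ^ (K + 1) = 2 ^ K + 2 ^ K := by ring
  have key : (2 ^ (K + 1) - 1) * a = 2 ^ K * (2 * a - 1) + (2 ^ K - a) := by
    zify [ha, haK, show (1:ℕ) ≤ 2 ^ (K + 1) by omega, show (1:ℕ) ≤ 2 * a by omega]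
    ring
  rw [Nat.testBit_eq_decide_div_mod_eq, key, Nat.mul_add_div hP, Nat.div_eq_of_lt (by omega)]
  simp only [add_zero]
  have : (2 * a - 1) % 2 = 1 := by omega
  rw [this]
  simp

/-- The discrete Sierpinski triangle is aperiodic under translation: no
nonzero translation vector `(a,b)` preserves membership in `S_△`. -/
theorem sierpinski_aperiodic :
    ¬ ∃ a b : ℕ, (a, b) ≠ ((0 : ℕ), (0 : ℕ)) ∧
      ∀ x y : ℕ, ((x, y) ∈ sierpinski ↔ (x + a, y + b) ∈ sierpinski) := by
  rintro ⟨a, b, hne, hper⟩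
  have hper' : ∀ x y : ℕ, (x &&& y = 0) ↔ ((x + a) &&& (y + b) = 0) := by
    intro x y
    rw [← mem_sierpinski_iff, ← mem_sierpinski_iff]
    exact hper x y
  rcases Nat.eq_zero_or_pos a with rfl | hapos
  · rcases Nat.eq_zero_or_pos b with rfl | hbpos
    · exact hne rfl
    · -- a = 0, b > 0 : point (2^K, 2^K - b)
      obtain ⟨K, hK⟩ : ∃ K, b ≤ 2 ^ K := ⟨b, (Nat.lt_two_pow_self (n := b)).le⟩
      have hP : 0 < 2 ^ K := Nat.pow_pos (n := K) (by norm_num)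
      have h1 : (2 ^ K) &&& (2 ^ K - b) = 0 := by
        rw [Nat.land_comm]; exact pow_land_of_lt (by omega)
      have h2 := (hper' (2 ^ K) (2 ^ K - b)).mp h1
      rw [show 2 ^ K - b + b = 2 ^ K by omega, add_zero] at h2
      have : (2 ^ K) &&& (2 ^ K) = 2 ^ K := Nat.and_self _
      omega
  · rcases Nat.eq_zero_or_pos b with rfl | hbpos
    · -- a > 0, b = 0 : point (2^K - a, 2^K)
      obtain ⟨K, hK⟩ : ∃ K, a ≤ 2 ^ K := ⟨a, (Nat.lt_two_pow_self (n := a)).le⟩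
      have h1 : (2 ^ K - a) &&& (2 ^ K) = 0 := pow_land_of_lt (by
        have := Nat.pow_pos (n := K) (show 0 < 2 by norm_num); omega)
      have h2 := (hper' (2 ^ K - a) (2 ^ K)).mp h1
      rw [show 2 ^ K - a + a = 2 ^ K by omega, add_zero] at h2
      have : (2 ^ K) &&& (2 ^ K) = 2 ^ K := Nat.and_self _
      have hP : 0 < 2 ^ K := Nat.pow_pos (n := K) (by norm_num)
      omega
    · -- a > 0, b > 0 : iterate and use n = 2^(K+1) - 1
      have hiter : ∀ n : ℕ, (n * a) &&& (n * b) = 0 := by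
        intro n
        induction n with
        | zero => simp
        | succ n ihn =>
          have := (hper' (n * a) (n * b)).mp ihn
          have hrw : n * a + a = (n + 1) * a := by ring
          have hrw2 : n * b + b = (n + 1) * b := by ring
          rwa [hrw, hrw2] at this
      obtain ⟨K, hKa, hKb⟩ : ∃ K, a ≤ 2 ^ K ∧ b ≤ 2 ^ K := by
        exact ⟨a + b,
          le_of_lt (lt_of_lt_of_le (Nat.lt_two_pow_self (n := a))
            (Nat.pow_le_pow_right (by norm_num) (by omega))),
          le_of_lt (lt_of_lt_of_le (Nat.lt_two_pow_self (n := b))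
            (Nat.pow_le_pow_right (by norm_num) (by omega)))⟩
      have h := hiter (2 ^ (K + 1) - 1)
      exact absurd ((and_zero_iff _ _).mp h K
        ⟨testBit_mul_pred hapos hKa, testBit_mul_pred hbpos hKb⟩) (by simp)
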